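/- Fix an integer k ≥ 1. In the ring of formal power series ℝ⟦X⟧, the probability generating function G(X) = ∑_{v≥0} P(V(k) = v)·X^v satisfies both (1 − q·∑_{i=1}^{k} p^{i−1}·X^i)·G(X) = p^k·X^k and (1 − X + p^k·q·X^{k+1})·G(X) = p^k·X^k − p^{k+1}·X^{k+1}. -/

import Mathlib

open MeasureTheory Finset PowerSeries

open scoped Classical

/-- Waiting time for the first success run of length `k`: the smallest `n ≥ k` such that
trials `n - k + 1, …, n` are all successes (trials are indexed from `1`). -/
noncomputable def waitingTime (k : ℕ) (ω : ℕ → Bool) : ℕ :=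
  sInf {n | k ≤ n ∧ ∀ i ∈ Finset.Icc (n - k + 1) n, ω i = true}

namespace Stmt6Aux

/-- weight of a single trial -/
def wt (p : ℝ) (b : Bool) : ℝ := if b then p else 1 - p

lemma wt_nonneg {p : ℝ} (h0 : 0 ≤ p) (h1 : p ≤ 1) (b : Bool) : 0 ≤ wt p b := by
  cases b <;> simp [wt] <;> linarith

/-- extend a finite string (positions `1..n` stored at `0..n-1`) to `ℕ → Bool`. -/
def extc (n : ℕ) (c : Fin n → Bool) : ℕ → Bool :=
  fun i => if h : 1 ≤ i ∧ i ≤ n then c ⟨i - 1, by omega⟩ else true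

lemma extc_eq {n : ℕ} (c : Fin n → Bool) {i : ℕ} (h1 : 1 ≤ i) (h2 : i ≤ n) :
    extc n c i = c ⟨i - 1, by omega⟩ := dif_pos ⟨h1, h2⟩

lemma extc_apply {n : ℕ} (c : Fin n → Bool) (j : Fin n) : extc n c ((j : ℕ) + 1) = c j := by
  rw [extc_eq c (by omega) (by omega)]
  exact congrArg c (Fin.ext (by simp))

/-- total weight of a string of length `n` -/
def W (p : ℝ) (n : ℕ) (c : Fin n → Bool) : ℝ := ∏ i ∈ Finset.Icc 1 n, wt p (extc n c i)

lemma W_nonneg {p : ℝ} (h0 : 0 ≤ p) (h1 : p ≤ 1) (n : ℕ) (c : Fin n → Bool) : 0 ≤ W p n c :=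
  Finset.prod_nonneg fun _ _ => wt_nonneg h0 h1 _

lemma meas_cyl (n : ℕ) (b : ℕ → Bool) :
    MeasurableSet {ω : ℕ → Bool | ∀ i, 1 ≤ i → i ≤ n → ω i = b i} := by
  have : {ω : ℕ → Bool | ∀ i, 1 ≤ i → i ≤ n → ω i = b i}
      = ⋂ (i : ℕ), ⋂ (_ : 1 ≤ i), ⋂ (_ : i ≤ n), (fun ω : ℕ → Bool => ω i) ⁻¹' {b i} := by
    ext ω; simp [Set.mem_iInter]
  rw [this]
  exact MeasurableSet.iInter fun i => MeasurableSet.iInter fun _ =>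
    MeasurableSet.iInter fun _ => (measurable_pi_apply i) (measurableSet_singleton _)

lemma cylinder_decomp (p : ℝ) (μ : Measure (ℕ → Bool))
    (hμ : ∀ (n : ℕ) (b : ℕ → Bool),
      μ {ω | ∀ i, 1 ≤ i → i ≤ n → ω i = b i}
        = ENNReal.ofReal (∏ i ∈ Finset.Icc 1 n, if b i = true then p else 1 - p))
    (n : ℕ) (Q : (ℕ → Bool) → Prop)
    (hQ : ∀ ω ω' : ℕ → Bool, (∀ i, 1 ≤ i → i ≤ n → ω i = ω' i) → Q ω → Q ω') :
    μ {ω | Q ω} = ∑ c ∈ Finset.univ.filter (fun c : Fin n → Bool => Q (extc n c)),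
      ENNReal.ofReal (W p n c) := by
  have hset : {ω | Q ω} = ⋃ c ∈ Finset.univ.filter (fun c : Fin n → Bool => Q (extc n c)),
      {ω : ℕ → Bool | ∀ i, 1 ≤ i → i ≤ n → ω i = extc n c i} := by
    ext ω
    simp only [Set.mem_setOf_eq, Set.mem_iUnion, Finset.mem_filter, Finset.mem_univ, true_and]
    constructor
    · intro hω
      refine ⟨fun j => ω ((j : ℕ) + 1), ?_, ?_⟩
      · refine hQ ω _ (fun i h1 h2 => ?_) hω
        rw [extc_eq _ h1 h2]
        show ω i = ω ((i - 1) + 1)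
        congr 1; omega
      · intro i h1 h2
        rw [extc_eq _ h1 h2]
        show ω i = ω ((i - 1) + 1)
        congr 1; omega
    · rintro ⟨c, hc, hag⟩
      exact hQ (extc n c) ω (fun i h1 h2 => (hag i h1 h2).symm) hc
  rw [hset, measure_biUnion_finset ?_ (fun c _ => meas_cyl n (extc n c))]
  · refine Finset.sum_congr rfl fun c _ => ?_
    rw [hμ n (extc n c)]
    rfl
  · intro c _ c' _ hne
    rw [Function.onFun, Set.disjoint_left]
    intro ω h1 h2
    apply hne
    funext j
    have e1 := h1 ((j : ℕ) + 1) (by omega) (by omega)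
    have e2 := h2 ((j : ℕ) + 1) (by omega) (by omega)
    rw [extc_apply] at e1 e2
    rw [← e1, ← e2]

lemma cylinder_decomp_real (p : ℝ) (h0 : 0 ≤ p) (h1 : p ≤ 1) (μ : Measure (ℕ → Bool))
    (hμ : ∀ (n : ℕ) (b : ℕ → Bool),
      μ {ω | ∀ i, 1 ≤ i → i ≤ n → ω i = b i}
        = ENNReal.ofReal (∏ i ∈ Finset.Icc 1 n, if b i = true then p else 1 - p))
    (n : ℕ) (Q : (ℕ → Bool) → Prop)
    (hQ : ∀ ω ω' : ℕ → Bool, (∀ i, 1 ≤ i → i ≤ n → ω i = ω' i) → Q ω → Q ω') :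
    (μ {ω | Q ω}).toReal
      = ∑ c ∈ Finset.univ.filter (fun c : Fin n → Bool => Q (extc n c)), W p n c := by
  rw [cylinder_decomp p μ hμ n Q hQ, ENNReal.toReal_sum (fun _ _ => ENNReal.ofReal_ne_top)]
  exact Finset.sum_congr rfl fun c _ => ENNReal.toReal_ofReal (W_nonneg h0 h1 n c)

lemma extc_shift {n i : ℕ} (hin : i ≤ n) (c : Fin n → Bool) {j : ℕ}
    (h1 : 1 ≤ j) (h2 : j ≤ n - i) :
    extc (n - i) (fun j : Fin (n - i) => c ⟨(j : ℕ) + i, by omega⟩) j = extc n c (j + i) := by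
  rw [extc_eq _ h1 h2, extc_eq c (by omega) (by omega)]
  show c ⟨(j - 1) + i, _⟩ = c ⟨j + i - 1, _⟩
  congr 1
  exact Fin.ext (by simp; omega)

lemma sum_shift (p : ℝ) {n i : ℕ} (hi1 : 1 ≤ i) (hin : i ≤ n) (π : ℕ → Bool)
    (Q : (ℕ → Bool) → Prop)
    (hQ : ∀ ω ω' : ℕ → Bool, (∀ j, 1 ≤ j → j ≤ n - i → ω j = ω' j) → Q ω → Q ω') :
    ∑ c ∈ Finset.univ.filter (fun c : Fin n → Bool =>
        (∀ j, 1 ≤ j → j ≤ i → extc n c j = π j) ∧ Q (fun m => extc n c (m + i))),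
      W p n c
    = (∏ j ∈ Finset.Icc 1 i, wt p (π j)) *
      ∑ d ∈ Finset.univ.filter (fun d : Fin (n - i) → Bool => Q (extc (n - i) d)),
        W p (n - i) d := by
  rw [Finset.mul_sum]
  refine Finset.sum_bij' (i := fun c _ => (fun j : Fin (n - i) => c ⟨(j : ℕ) + i, by omega⟩))
    (j := fun d _ => (fun j : Fin n =>
      if h : (j : ℕ) + 1 ≤ i then π ((j : ℕ) + 1) else d ⟨(j : ℕ) + 1 - i - 1, by omega⟩))
    ?_ ?_ ?_ ?_ ?_
  · -- map into target filter
    intro c hc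
    simp only [Finset.mem_filter, Finset.mem_univ, true_and] at hc ⊢
    refine hQ _ _ (fun m hm1 hm2 => ?_) hc.2
    exact (extc_shift hin c hm1 hm2).symm
  · -- inverse maps into source filter
    intro d hd
    simp only [Finset.mem_filter, Finset.mem_univ, true_and] at hd ⊢
    constructor
    · intro j hj1 hj2
      rw [extc_eq _ hj1 (le_trans hj2 hin)]
      show (if h : (j - 1) + 1 ≤ i then π ((j - 1) + 1) else _) = π j
      rw [dif_pos (by omega)]
      congr 1; omega
    · refine hQ _ _ (fun m hm1 hm2 => ?_) hd
      rw [extc_eq _ hm1 hm2, extc_eq _ (by omega) (by omega)]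
      show d ⟨m - 1, _⟩ = (if h : (m + i - 1) + 1 ≤ i then π ((m + i - 1) + 1)
          else d ⟨(m + i - 1) + 1 - i - 1, _⟩)
      rw [dif_neg (by omega)]
      congr 1; exact Fin.ext (by simp; omega)
  · -- left inverse
    intro c hc
    simp only [Finset.mem_filter, Finset.mem_univ, true_and] at hc
    funext j
    by_cases h : (j : ℕ) + 1 ≤ i
    · show (if h : (j : ℕ) + 1 ≤ i then π ((j : ℕ) + 1) else _) = c j
      rw [dif_pos h, ← hc.1 ((j : ℕ) + 1) (by omega) h, extc_apply]
    · show (if h : (j : ℕ) + 1 ≤ i then π ((j : ℕ) + 1)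
          else c ⟨((j : ℕ) + 1 - i - 1) + i, _⟩) = c j
      rw [dif_neg h]
      congr 1; exact Fin.ext (by simp; omega)
  · -- right inverse
    intro d hd
    funext j
    show (if h : ((j : ℕ) + i) + 1 ≤ i then π (((j : ℕ) + i) + 1)
        else d ⟨((j : ℕ) + i) + 1 - i - 1, _⟩) = d j
    rw [dif_neg (by omega)]
    congr 1; exact Fin.ext (by simp; omega)
  · -- weights
    intro c hc
    simp only [Finset.mem_filter, Finset.mem_univ, true_and] at hc
    have hIcc : Finset.Icc 1 n = Finset.Ioc 0 n := (Finset.Icc_add_one_left_eq_Ioc 0 n)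
    have hIcc2 : Finset.Icc 1 i = Finset.Ioc 0 i := (Finset.Icc_add_one_left_eq_Ioc 0 i)
    have hsplit : (∏ j ∈ Finset.Ioc 0 i, wt p (extc n c j)) *
        ∏ j ∈ Finset.Ioc i n, wt p (extc n c j) = ∏ j ∈ Finset.Ioc 0 n, wt p (extc n c j) :=
      Finset.prod_Ioc_consecutive _ (Nat.zero_le i) hin
    have e1 : ∏ j ∈ Finset.Ioc 0 i, wt p (extc n c j) = ∏ j ∈ Finset.Icc 1 i, wt p (π j) := by
      rw [← hIcc2]
      refine Finset.prod_congr rfl fun j hj => ?_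
      rw [Finset.mem_Icc] at hj
      rw [hc.1 j hj.1 hj.2]
    have hmap : Finset.Ioc i n = (Finset.Icc 1 (n - i)).map (addRightEmbedding i) := by
      rw [Finset.map_add_right_Icc, ← Finset.Icc_add_one_left_eq_Ioc]
      congr 1 <;> omega
    have e2 : ∏ j ∈ Finset.Ioc i n, wt p (extc n c j)
        = ∏ j ∈ Finset.Icc 1 (n - i),
            wt p (extc (n - i) (fun j : Fin (n - i) => c ⟨(j : ℕ) + i, by omega⟩) j) := by
      rw [hmap, Finset.prod_map]
      refine Finset.prod_congr rfl fun j hj => ?_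
      rw [Finset.mem_Icc] at hj
      rw [extc_shift hin c hj.1 hj.2]
      rfl
    simp only [W]
    rw [hIcc, ← hsplit, e1, e2]

/-- `runEnd k m ω` : trials `m-k+1,…,m` are all successes. -/
def runEnd (k m : ℕ) (ω : ℕ → Bool) : Prop := ∀ j ∈ Finset.Icc (m - k + 1) m, ω j = true

lemma runEnd_shift {k i : ℕ} (hk : 1 ≤ k) (hi1 : 1 ≤ i) (hik : i ≤ k) {ω : ℕ → Bool}
    (hpre : ∀ j, 1 ≤ j → j < i → ω j = true) (hfi : ω i = false)
    {m : ℕ} (hm : k ≤ m) :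
    runEnd k m ω ↔ (i + k ≤ m ∧ runEnd k (m - i) (fun j => ω (j + i))) := by
  constructor
  · intro hr
    have him : i + k ≤ m := by
      by_contra hcon
      have : ω i = true := hr i (by simp [Finset.mem_Icc]; omega)
      simp [hfi] at this
    refine ⟨him, fun j hj => ?_⟩
    rw [Finset.mem_Icc] at hj
    exact hr (j + i) (by rw [Finset.mem_Icc]; omega)
  · rintro ⟨him, hr⟩ j hj
    rw [Finset.mem_Icc] at hj
    have h1 : i < j := by omega
    have := hr (j - i) (by rw [Finset.mem_Icc]; omega)
    have h2 : ω (j - i + i) = true := this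
    have hji : j - i + i = j := by omega
    rwa [hji] at h2

lemma waitingTime_eq_iff {k v : ℕ} (hv : 1 ≤ v) (ω : ℕ → Bool) :
    waitingTime k ω = v ↔
      (k ≤ v ∧ runEnd k v ω ∧ ∀ m, k ≤ m → m < v → ¬ runEnd k m ω) := by
  constructor
  · intro h
    have hne : {n | k ≤ n ∧ ∀ i ∈ Finset.Icc (n - k + 1) n, ω i = true}.Nonempty := by
      by_contra hcon
      rw [Set.not_nonempty_iff_eq_empty] at hcon
      rw [waitingTime, hcon] at h
      simp at h
      omega
    have hmem := Nat.sInf_mem hne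
    rw [waitingTime] at h
    rw [h] at hmem
    refine ⟨hmem.1, hmem.2, fun m hm1 hm2 hr => ?_⟩
    have : m ∉ {n | k ≤ n ∧ ∀ i ∈ Finset.Icc (n - k + 1) n, ω i = true} :=
      Nat.notMem_of_lt_sInf (h ▸ hm2)
    exact this ⟨hm1, hr⟩
  · rintro ⟨h1, h2, h3⟩
    have hmem : v ∈ {n | k ≤ n ∧ ∀ i ∈ Finset.Icc (n - k + 1) n, ω i = true} := ⟨h1, h2⟩
    have hle : waitingTime k ω ≤ v := Nat.sInf_le hmem
    rcases Nat.lt_or_ge (waitingTime k ω) v with hlt | hge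
    · exfalso
      have hsmem := Nat.sInf_mem ⟨v, hmem⟩
      exact h3 _ hsmem.1 hlt hsmem.2
    · omega

lemma waitingTime_zero_noRun {k : ℕ} (hk : 1 ≤ k) {ω : ℕ → Bool}
    (h : waitingTime k ω = 0) {m : ℕ} (hm : k ≤ m) : ¬ runEnd k m ω := by
  intro hr
  have hmem : m ∈ {n | k ≤ n ∧ ∀ i ∈ Finset.Icc (n - k + 1) n, ω i = true} := ⟨hm, hr⟩
  have := Nat.sInf_mem (⟨m, hmem⟩ :
    {n | k ≤ n ∧ ∀ i ∈ Finset.Icc (n - k + 1) n, ω i = true}.Nonempty)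
  rw [waitingTime] at h
  rw [h] at this
  exact absurd this.1 (by omega)

lemma geom_sum_Icc (p : ℝ) (k : ℕ) :
    ∑ i ∈ Finset.Icc 1 k, (1 - p) * p ^ (i - 1) = 1 - p ^ k := by
  induction k with
  | zero => simp
  | succ k ih =>
    rw [Finset.sum_Icc_succ_top (by omega), ih]
    have : (k + 1) - 1 = k := by omega
    rw [this, pow_succ]
    ring

lemma prefix_weight (p : ℝ) {i : ℕ} (hi : 1 ≤ i) :
    ∏ j ∈ Finset.Icc 1 i, wt p (decide (j < i)) = p ^ (i - 1) * (1 - p) := by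
  obtain ⟨i', rfl⟩ : ∃ i', i = i' + 1 := ⟨i - 1, by omega⟩
  rw [Finset.prod_Icc_succ_top (by omega)]
  have h1 : ∏ j ∈ Finset.Icc 1 i', wt p (decide (j < i' + 1)) = p ^ i' := by
    have hc : ∀ j ∈ Finset.Icc 1 i', wt p (decide (j < i' + 1)) = p := by
      intro j hj
      rw [Finset.mem_Icc] at hj
      have hd : decide (j < i' + 1) = true := decide_eq_true (by omega)
      rw [hd]; rfl
    rw [Finset.prod_congr rfl hc, Finset.prod_const, Nat.card_Icc]
    congr 1
  rw [h1]
  have : decide (i' + 1 < i' + 1) = false := decide_eq_false (by omega)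
  rw [this]
  have : (i' + 1) - 1 = i' := by omega
  rw [this]; rfl

lemma master (p : ℝ) (hp0 : 0 < p) (hp1 : p < 1)
    (μ : Measure (ℕ → Bool)) [IsProbabilityMeasure μ]
    (hμ : ∀ (n : ℕ) (b : ℕ → Bool),
      μ {ω | ∀ i, 1 ≤ i → i ≤ n → ω i = b i}
        = ENNReal.ofReal (∏ i ∈ Finset.Icc 1 n, if b i = true then p else 1 - p))
    (k n : ℕ) (hk : 1 ≤ k) (hkn : k ≤ n)
    (Q : ℕ → (ℕ → Bool) → Prop)
    (hdep : ∀ m, n - k ≤ m → ∀ ω ω' : ℕ → Bool,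
      (∀ i, 1 ≤ i → i ≤ m → ω i = ω' i) → Q m ω → Q m ω')
    (hff : ∀ ω, Q n ω → ∃ j, 1 ≤ j ∧ j ≤ k ∧ ω j = false)
    (hshift : ∀ i, 1 ≤ i → i ≤ k → ∀ ω : ℕ → Bool,
        (∀ j, 1 ≤ j → j < i → ω j = true) → ω i = false →
        (Q n ω ↔ Q (n - i) (fun m => ω (m + i)))) :
    (μ {ω | Q n ω}).toReal
      = ∑ i ∈ Finset.Icc 1 k, (1 - p) * p ^ (i - 1) * (μ {ω | Q (n - i) ω}).toReal := by
  rw [cylinder_decomp_real p hp0.le hp1.le μ hμ n (Q n) (hdep n (by omega))]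
  set ff : (Fin n → Bool) → ℕ := fun c => sInf {j | 1 ≤ j ∧ extc n c j = false} with hffdef
  have hmaps : ∀ c ∈ Finset.univ.filter (fun c : Fin n → Bool => Q n (extc n c)),
      ff c ∈ Finset.Icc 1 k := by
    intro c hc
    rw [Finset.mem_filter] at hc
    obtain ⟨j, hj1, hj2, hj3⟩ := hff _ hc.2
    have hne : {j | 1 ≤ j ∧ extc n c j = false}.Nonempty := ⟨j, hj1, hj3⟩
    have hmem := Nat.sInf_mem hne
    have hle : ff c ≤ j := Nat.sInf_le ⟨hj1, hj3⟩
    rw [Finset.mem_Icc]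
    exact ⟨hmem.1, le_trans hle hj2⟩
  rw [← Finset.sum_fiberwise_of_maps_to hmaps (W p n)]
  refine Finset.sum_congr rfl fun i hi => ?_
  rw [Finset.mem_Icc] at hi
  have hi1 : 1 ≤ i := hi.1
  have hik : i ≤ k := hi.2
  have hin : i ≤ n := le_trans hik hkn
  rw [Finset.filter_filter]
  have hpred : ∀ c : Fin n → Bool,
      (Q n (extc n c) ∧ ff c = i) ↔
      ((∀ j, 1 ≤ j → j ≤ i → extc n c j = (fun j => decide (j < i)) j) ∧
        Q (n - i) (fun m => extc n c (m + i))) := by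
    intro c
    constructor
    · rintro ⟨hQn, hffi⟩
      obtain ⟨j, hj1, hj2, hj3⟩ := hff _ hQn
      have hne : {j | 1 ≤ j ∧ extc n c j = false}.Nonempty := ⟨j, hj1, hj3⟩
      have hmem := Nat.sInf_mem hne
      have hffi' : sInf {j | 1 ≤ j ∧ extc n c j = false} = i := hffi
      rw [hffi'] at hmem
      have hfalse : extc n c i = false := hmem.2
      have htrue : ∀ j', 1 ≤ j' → j' < i → extc n c j' = true := by
        intro j' h1 h2
        have hnm : j' ∉ {j | 1 ≤ j ∧ extc n c j = false} :=
          Nat.notMem_of_lt_sInf (by rw [hffi']; omega)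
        by_contra hb
        have : extc n c j' = false := by simpa using hb
        exact hnm ⟨h1, this⟩
      constructor
      · intro j' h1 h2
        rcases Nat.lt_or_ge j' i with hlt | hge
        · rw [htrue j' h1 hlt]
          simp [hlt]
        · have : j' = i := by omega
          subst this
          rw [hfalse]
          simp
      · exact (hshift i hi1 hik (extc n c) htrue hfalse).mp hQn
    · rintro ⟨hpre, hQ'⟩
      have hfalse : extc n c i = false := by
        have := hpre i hi1 le_rfl
        simpa using this
      have htrue : ∀ j', 1 ≤ j' → j' < i → extc n c j' = true := by
        intro j' h1 h2
        have := hpre j' h1 (by omega)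
        simpa [h2] using this
      refine ⟨(hshift i hi1 hik (extc n c) htrue hfalse).mpr hQ', ?_⟩
      have hmemi : i ∈ {j | 1 ≤ j ∧ extc n c j = false} := ⟨hi1, hfalse⟩
      have hle : ff c ≤ i := Nat.sInf_le hmemi
      have hge : i ≤ ff c := by
        by_contra hcon
        have hmem := Nat.sInf_mem (⟨i, hmemi⟩ : {j | 1 ≤ j ∧ extc n c j = false}.Nonempty)
        have h1 : 1 ≤ ff c := hmem.1
        have h2 : extc n c (ff c) = false := hmem.2
        rw [htrue (ff c) h1 (by omega)] at h2
        simp at h2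
      omega
  rw [Finset.filter_congr (fun c _ => by
    rw [show (Q n (extc n c) ∧ ff c = i) = _ from propext (hpred c)])]
  rw [sum_shift p hi1 hin (fun j => decide (j < i)) (Q (n - i)) (hdep (n - i) (by omega))]
  rw [prefix_weight p hi1]
  rw [cylinder_decomp_real p hp0.le hp1.le μ hμ (n - i) (Q (n - i)) (hdep (n - i) (by omega))]
  ring

lemma seriesPart (p : ℝ) (k : ℕ) (hk : 1 ≤ k) (f : ℕ → ℝ)
    (hsmall : ∀ v, v < k → f v = 0) (hfk : f k = p ^ k)
    (hrec : ∀ n, k < n → f n = ∑ i ∈ Finset.Icc 1 k, (1 - p) * p ^ (i - 1) * f (n - i)) :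
    (1 - ∑ i ∈ Finset.Icc 1 k,
          PowerSeries.C ((1 - p) * p ^ (i - 1)) * PowerSeries.X ^ i) * PowerSeries.mk f
        = PowerSeries.C (p ^ k) * PowerSeries.X ^ k ∧
    (1 - PowerSeries.X + PowerSeries.C (p ^ k * (1 - p)) * PowerSeries.X ^ (k + 1)) *
        PowerSeries.mk f
      = PowerSeries.C (p ^ k) * PowerSeries.X ^ k
        - PowerSeries.C (p ^ (k + 1)) * PowerSeries.X ^ (k + 1) := by
  have key : ∀ n : ℕ,
      f n - ∑ i ∈ Finset.Icc 1 k, (if i ≤ n then (1 - p) * p ^ (i - 1) * f (n - i) else 0)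
        = if n = k then p ^ k else 0 := by
    intro n
    rcases lt_trichotomy n k with h | h | h
    · rw [if_neg (by omega), hsmall n h, Finset.sum_eq_zero, sub_zero]
      intro i hi
      rw [Finset.mem_Icc] at hi
      split_ifs with hin
      · rw [hsmall (n - i) (by omega), mul_zero]
      · rfl
    · subst h
      rw [if_pos rfl, hfk, Finset.sum_eq_zero, sub_zero]
      intro i hi
      rw [Finset.mem_Icc] at hi
      rw [if_pos hi.2, hsmall (n - i) (by omega), mul_zero]
    · rw [if_neg (by omega)]
      have e : ∑ i ∈ Finset.Icc 1 k, (if i ≤ n then (1 - p) * p ^ (i - 1) * f (n - i) else 0)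
          = ∑ i ∈ Finset.Icc 1 k, (1 - p) * p ^ (i - 1) * f (n - i) := by
        refine Finset.sum_congr rfl fun i hi => ?_
        rw [Finset.mem_Icc] at hi
        rw [if_pos (by omega)]
      rw [e, ← hrec n h, sub_self]
  have hG1 : (1 - ∑ i ∈ Finset.Icc 1 k,
        PowerSeries.C ((1 - p) * p ^ (i - 1)) * PowerSeries.X ^ i) * PowerSeries.mk f
      = PowerSeries.C (p ^ k) * PowerSeries.X ^ k := by
    ext n
    rw [sub_mul, one_mul, Finset.sum_mul, map_sub, map_sum, PowerSeries.coeff_mk]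
    have hterm : ∀ i ∈ Finset.Icc 1 k,
        (PowerSeries.coeff n) (PowerSeries.C ((1 - p) * p ^ (i - 1)) * PowerSeries.X ^ i
            * PowerSeries.mk f)
          = if i ≤ n then (1 - p) * p ^ (i - 1) * f (n - i) else 0 := by
      intro i _
      rw [show PowerSeries.C ((1 - p) * p ^ (i - 1)) * PowerSeries.X ^ i * PowerSeries.mk f
          = PowerSeries.C ((1 - p) * p ^ (i - 1)) * (PowerSeries.mk f * PowerSeries.X ^ i)
          from by ring]
      rw [PowerSeries.coeff_C_mul, PowerSeries.coeff_mul_X_pow', mul_ite, mul_zero,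
        PowerSeries.coeff_mk]
    rw [Finset.sum_congr rfl hterm, key n, PowerSeries.coeff_C_mul, PowerSeries.coeff_X_pow,
      mul_ite, mul_one, mul_zero]
  refine ⟨hG1, ?_⟩
  have hCA : PowerSeries.C p * PowerSeries.X
        * (∑ i ∈ Finset.Icc 1 k, PowerSeries.C ((1 - p) * p ^ (i - 1)) * PowerSeries.X ^ i)
      = ∑ i ∈ Finset.Icc 2 (k + 1),
          PowerSeries.C ((1 - p) * p ^ (i - 1)) * PowerSeries.X ^ i := by
    rw [Finset.mul_sum]
    have hmap : Finset.Icc 2 (k + 1) = (Finset.Icc 1 k).map (addRightEmbedding 1) := by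
      rw [Finset.map_add_right_Icc]
    rw [hmap, Finset.sum_map]
    refine Finset.sum_congr rfl fun i hi => ?_
    rw [Finset.mem_Icc] at hi
    obtain ⟨i', rfl⟩ : ∃ i', i = i' + 1 := ⟨i - 1, by omega⟩
    show PowerSeries.C p * PowerSeries.X
        * (PowerSeries.C ((1 - p) * p ^ (i' + 1 - 1)) * PowerSeries.X ^ (i' + 1))
      = PowerSeries.C ((1 - p) * p ^ (i' + 1 + 1 - 1)) * PowerSeries.X ^ (i' + 1 + 1)
    simp only [Nat.add_sub_cancel]
    rw [show (1 - p) * p ^ (i' + 1) = p * ((1 - p) * p ^ i') from by rw [pow_succ]; ring,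
      map_mul (PowerSeries.C (R := ℝ)) p ((1 - p) * p ^ i')]
    ring
  have i2 : ∑ i ∈ Finset.Icc 1 (k + 1),
        PowerSeries.C ((1 - p) * p ^ (i - 1)) * PowerSeries.X ^ i
      = (∑ i ∈ Finset.Icc 1 k,
          PowerSeries.C ((1 - p) * p ^ (i - 1)) * PowerSeries.X ^ i)
        + PowerSeries.C ((1 - p) * p ^ (k + 1 - 1)) * PowerSeries.X ^ (k + 1) :=
    Finset.sum_Icc_succ_top (by omega) _
  have i1 : Finset.Icc 1 (k + 1) = insert 1 (Finset.Icc 2 (k + 1)) := by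
    ext a
    simp only [Finset.mem_Icc, Finset.mem_insert]
    omega
  rw [i1, Finset.sum_insert (by simp)] at i2
  simp only [Nat.add_sub_cancel, Nat.sub_self, pow_zero, mul_one, pow_one] at i2
  have hX : (PowerSeries.X : PowerSeries ℝ)
      = PowerSeries.C p * PowerSeries.X + PowerSeries.C (1 - p) * PowerSeries.X := by
    rw [← add_mul, ← map_add]
    norm_num
  have hfac : (1 - PowerSeries.X + PowerSeries.C (p ^ k * (1 - p)) * PowerSeries.X ^ (k + 1))
      = (1 - PowerSeries.C p * PowerSeries.X) *
        (1 - ∑ i ∈ Finset.Icc 1 k,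
            PowerSeries.C ((1 - p) * p ^ (i - 1)) * PowerSeries.X ^ i) := by
    rw [show p ^ k * (1 - p) = (1 - p) * p ^ k from mul_comm _ _]
    linear_combination -hCA - i2 - hX
  have hrhs2 : PowerSeries.C (p ^ k) * PowerSeries.X ^ k
        - PowerSeries.C (p ^ (k + 1)) * PowerSeries.X ^ (k + 1)
      = (1 - PowerSeries.C p * PowerSeries.X)
        * (PowerSeries.C (p ^ k) * PowerSeries.X ^ k) := by
    rw [show p ^ (k + 1) = p * p ^ k from by rw [pow_succ]; ring, map_mul]
    ring
  rw [hfac, mul_assoc, hG1, ← hrhs2]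

end Stmt6Aux

open Stmt6Aux

theorem stmt6 (p : ℝ) (hp0 : 0 < p) (hp1 : p < 1) (k : ℕ) (hk : 1 ≤ k)
    (μ : Measure (ℕ → Bool)) [IsProbabilityMeasure μ]
    (hμ : ∀ (n : ℕ) (b : ℕ → Bool),
      μ {ω | ∀ i, 1 ≤ i → i ≤ n → ω i = b i}
        = ENNReal.ofReal (∏ i ∈ Finset.Icc 1 n, if b i = true then p else 1 - p)) :
    (1 - ∑ i ∈ Finset.Icc 1 k,
          PowerSeries.C ((1 - p) * p ^ (i - 1)) * PowerSeries.X ^ i) *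
        PowerSeries.mk (fun v => (μ {ω | waitingTime k ω = v}).toReal)
      = PowerSeries.C (p ^ k) * PowerSeries.X ^ k ∧
    (1 - PowerSeries.X + PowerSeries.C (p ^ k * (1 - p)) * PowerSeries.X ^ (k + 1)) *
        PowerSeries.mk (fun v => (μ {ω | waitingTime k ω = v}).toReal)
      = PowerSeries.C (p ^ k) * PowerSeries.X ^ k
        - PowerSeries.C (p ^ (k + 1)) * PowerSeries.X ^ (k + 1) := by
  -- dependence of `waitingTime = m` on the first `m` coordinates
  have hdepV : ∀ m, 1 ≤ m → ∀ ω ω' : ℕ → Bool, (∀ i, 1 ≤ i → i ≤ m → ω i = ω' i) →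
      waitingTime k ω = m → waitingTime k ω' = m := by
    intro m hm ω ω' hag h
    rw [waitingTime_eq_iff hm] at h ⊢
    obtain ⟨h1, h2, h3⟩ := h
    refine ⟨h1, fun j hj => ?_, fun m' hm1 hm2 hr => ?_⟩
    · rw [Finset.mem_Icc] at hj
      rw [← hag j (by omega) (by omega)]
      exact h2 j (by rw [Finset.mem_Icc]; omega)
    · refine h3 m' hm1 hm2 (fun j hj => ?_)
      rw [Finset.mem_Icc] at hj
      rw [hag j (by omega) (by omega)]
      exact hr j (by rw [Finset.mem_Icc]; omega)
  -- the "no run up to n" predicates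
  have hdepN : ∀ n, ∀ ω ω' : ℕ → Bool, (∀ i, 1 ≤ i → i ≤ n → ω i = ω' i) →
      (∀ m, k ≤ m → m ≤ n → ¬ runEnd k m ω) → (∀ m, k ≤ m → m ≤ n → ¬ runEnd k m ω') := by
    intro n ω ω' hag h m hm1 hm2 hr
    refine h m hm1 hm2 (fun j hj => ?_)
    rw [Finset.mem_Icc] at hj
    rw [hag j (by omega) (by omega)]
    exact hr j (by rw [Finset.mem_Icc]; omega)
  -- recursion for the waiting-time distribution
  have hrecV : ∀ n, k < n →
      (μ {ω | waitingTime k ω = n}).toReal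
        = ∑ i ∈ Finset.Icc 1 k,
            (1 - p) * p ^ (i - 1) * (μ {ω | waitingTime k ω = (n - i)}).toReal := by
    intro n hn
    refine master p hp0 hp1 μ hμ k n hk (le_of_lt hn) (fun m ω => waitingTime k ω = m)
      (fun m hm => hdepV m (by omega)) ?_ ?_
    · intro ω h
      rw [waitingTime_eq_iff (by omega)] at h
      have hnr := h.2.2 k le_rfl hn
      by_contra hcon
      push_neg at hcon
      apply hnr
      intro j hj
      rw [Finset.mem_Icc] at hj
      by_contra hb
      exact hcon j (by omega) (by omega) (by simpa using hb)
    · intro i hi1 hik ω hpre hfi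
      constructor
      · intro h0
        have h : waitingTime k ω = n := h0
        rw [waitingTime_eq_iff (by omega)] at h
        obtain ⟨h1, h2, h3⟩ := h
        obtain ⟨hsa, hsb⟩ := (runEnd_shift hk hi1 hik hpre hfi (le_of_lt hn)).mp h2
        show waitingTime k (fun m => ω (m + i)) = n - i
        rw [waitingTime_eq_iff (by omega)]
        refine ⟨by omega, hsb, fun m' hm1 hm2 hr' => ?_⟩
        have hR : runEnd k (m' + i) ω := by
          refine (runEnd_shift hk hi1 hik hpre hfi (m := m' + i) (by omega)).mpr
            ⟨by omega, ?_⟩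
          have he : m' + i - i = m' := by omega
          rw [he]
          exact hr'
        exact h3 (m' + i) (by omega) (by omega) hR
      · intro h0
        have h : waitingTime k (fun m => ω (m + i)) = n - i := h0
        rw [waitingTime_eq_iff (by omega)] at h
        obtain ⟨h1, h2, h3⟩ := h
        show waitingTime k ω = n
        rw [waitingTime_eq_iff (by omega)]
        refine ⟨by omega, ?_, fun m hm1 hm2 hr => ?_⟩
        · exact (runEnd_shift hk hi1 hik hpre hfi (by omega : k ≤ n)).mpr ⟨by omega, h2⟩
        · obtain ⟨hsa, hsb⟩ := (runEnd_shift hk hi1 hik hpre hfi hm1).mp hr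
          exact h3 (m - i) (by omega) (by omega) hsb
  -- recursion for the "no run" probabilities
  have hgrec : ∀ n, k ≤ n →
      (μ {ω | ∀ m, k ≤ m → m ≤ n → ¬ runEnd k m ω}).toReal
        = ∑ i ∈ Finset.Icc 1 k, (1 - p) * p ^ (i - 1)
            * (μ {ω | ∀ m, k ≤ m → m ≤ n - i → ¬ runEnd k m ω}).toReal := by
    intro n hn
    refine master p hp0 hp1 μ hμ k n hk hn
      (fun n ω => ∀ m, k ≤ m → m ≤ n → ¬ runEnd k m ω)
      (fun m _ => hdepN m) ?_ ?_
    · intro ω h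
      have hnr := h k le_rfl hn
      by_contra hcon
      push_neg at hcon
      apply hnr
      intro j hj
      rw [Finset.mem_Icc] at hj
      by_contra hb
      exact hcon j (by omega) (by omega) (by simpa using hb)
    · intro i hi1 hik ω hpre hfi
      constructor
      · intro h m' hm1 hm2 hr'
        have hR : runEnd k (m' + i) ω := by
          refine (runEnd_shift hk hi1 hik hpre hfi (m := m' + i) (by omega)).mpr
            ⟨by omega, ?_⟩
          have he : m' + i - i = m' := by omega
          rw [he]
          exact hr'
        exact h (m' + i) (by omega) (by omega) hR
      · intro h m hm1 hm2 hr
        obtain ⟨hsa, hsb⟩ := (runEnd_shift hk hi1 hik hpre hfi hm1).mp hr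
        exact h (m - i) (by omega) (by omega) hsb
  -- monotonicity of the "no run" probabilities
  have hgmono : ∀ m n : ℕ, m ≤ n →
      (μ {ω | ∀ m', k ≤ m' → m' ≤ n → ¬ runEnd k m' ω}).toReal
        ≤ (μ {ω | ∀ m', k ≤ m' → m' ≤ m → ¬ runEnd k m' ω}).toReal := by
    intro m n hmn
    refine ENNReal.toReal_mono (measure_ne_top μ _) (measure_mono ?_)
    intro ω h m' h1 h2
    exact h m' h1 (by omega)
  have hq0 : (0 : ℝ) ≤ 1 - p ^ k := by
    have := pow_le_one₀ hp0.le hp1.le (n := k)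
    linarith
  have hq1 : 1 - p ^ k < 1 := by
    have := pow_pos hp0 k
    linarith
  -- geometric bound
  have hgbound : ∀ m : ℕ,
      (μ {ω | ∀ m', k ≤ m' → m' ≤ m * k → ¬ runEnd k m' ω}).toReal ≤ (1 - p ^ k) ^ m := by
    intro m
    induction m with
    | zero =>
      simpa using ENNReal.toReal_mono (by simp) (prob_le_one (μ := μ)
        (s := {ω | ∀ m', k ≤ m' → m' ≤ 0 * k → ¬ runEnd k m' ω}))
    | succ m ih =>
      have hkn : k ≤ (m + 1) * k := by nlinarith
      rw [hgrec ((m + 1) * k) hkn]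
      have hstep : ∑ i ∈ Finset.Icc 1 k, (1 - p) * p ^ (i - 1)
            * (μ {ω | ∀ m', k ≤ m' → m' ≤ (m + 1) * k - i → ¬ runEnd k m' ω}).toReal
          ≤ ∑ i ∈ Finset.Icc 1 k, (1 - p) * p ^ (i - 1)
            * (μ {ω | ∀ m', k ≤ m' → m' ≤ m * k → ¬ runEnd k m' ω}).toReal := by
        refine Finset.sum_le_sum fun i hi => ?_
        rw [Finset.mem_Icc] at hi
        refine mul_le_mul_of_nonneg_left ?_
          (mul_nonneg (by linarith) (pow_nonneg hp0.le _))
        refine hgmono (m * k) ((m + 1) * k - i) ?_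
        have he : (m + 1) * k = m * k + k := by ring
        omega
      refine le_trans hstep ?_
      rw [← Finset.sum_mul, geom_sum_Icc p k, pow_succ]
      rw [mul_comm ((1 - p ^ k) ^ m) (1 - p ^ k)]
      exact mul_le_mul_of_nonneg_left ih hq0
  -- waiting time 0 has probability 0
  have hf0 : (μ {ω | waitingTime k ω = 0}).toReal = 0 := by
    have hle : ∀ m : ℕ, (μ {ω | waitingTime k ω = 0}).toReal ≤ (1 - p ^ k) ^ m := by
      intro m
      refine le_trans (ENNReal.toReal_mono (measure_ne_top μ _) (measure_mono ?_))
        (hgbound m)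
      intro ω h m' h1 _
      exact waitingTime_zero_noRun hk h h1
    have htend := tendsto_pow_atTop_nhds_zero_of_lt_one hq0 hq1
    have h1 := ge_of_tendsto' htend hle
    have h2 : (0 : ℝ) ≤ (μ {ω | waitingTime k ω = 0}).toReal := ENNReal.toReal_nonneg
    linarith
  -- small values
  have hsmall : ∀ v, v < k → (μ {ω | waitingTime k ω = v}).toReal = 0 := by
    intro v hv
    rcases Nat.eq_zero_or_pos v with rfl | h1
    · exact hf0
    · have he : {ω : ℕ → Bool | waitingTime k ω = v} = ∅ := by
        ext ω
        simp only [Set.mem_setOf_eq, Set.mem_empty_iff_false, iff_false]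
        intro h
        rw [waitingTime_eq_iff h1] at h
        omega
      rw [he, measure_empty]
      rfl
  -- value at k
  have hfk : (μ {ω | waitingTime k ω = k}).toReal = p ^ k := by
    have hset : {ω : ℕ → Bool | waitingTime k ω = k}
        = {ω : ℕ → Bool | ∀ i, 1 ≤ i → i ≤ k → ω i = (fun _ => true) i} := by
      ext ω
      simp only [Set.mem_setOf_eq]
      rw [waitingTime_eq_iff hk]
      constructor
      · rintro ⟨-, h2, -⟩ i h1 hik
        exact h2 i (by rw [Finset.mem_Icc]; omega)
      · intro h
        refine ⟨le_rfl, fun j hj => ?_, fun m hm1 hm2 _ => by omega⟩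
        rw [Finset.mem_Icc] at hj
        exact h j (by omega) (by omega)
    rw [hset, hμ k (fun _ => true)]
    have hprod : (∏ i ∈ Finset.Icc 1 k, if (fun _ => true) i = true then p else 1 - p)
        = p ^ k := by
      simp [Finset.prod_const, Nat.card_Icc]
    rw [hprod, ENNReal.toReal_ofReal (pow_nonneg hp0.le k)]
  exact seriesPart p k hk _ hsmall hfk hrecV
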